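/- Let G be a finitely generated nilpotent group and let G_i denote its derived series (G_0 = G, G_{i+1} = [G_i, G_i]). If i is the largest index such that G_i has finite index in G, then the abelianization G_i/G_{i+1} is an abelian group of positive rank (i.e., it is infinite). -/

import Mathlib

/-- Let `G` be a finitely generated infinite nilpotent group and let
`derivedSeries G i` denote its derived series.  If `i` is the largest index such
that `derivedSeries G i` has finite index in `G`, then the abelianization
`G_i/G_{i+1}` is an abelian group of positive rank, i.e. it is infinite. -/
theorem stmt0 (G : Type*) [Group G] [Group.FG G] [Infinite G]
    [Group.IsNilpotent G] (i : ℕ)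
    (hfin : (derivedSeries G i).FiniteIndex)
    (hmax : ∀ j : ℕ, (derivedSeries G j).FiniteIndex → j ≤ i) :
    Infinite (Abelianization (derivedSeries G i)) := by
  set H := derivedSeries G i with hH
  by_contra hcon
  rw [not_infinite_iff_finite] at hcon
  -- commutator subgroup of H has finite index in H
  have hc : (commutator H).FiniteIndex := by
    have : Finite (H ⧸ commutator H) := hcon
    exact Subgroup.finiteIndex_of_finite_quotient
  -- map of commutator H under subtype is derivedSeries G (i+1)
  have hmap : (commutator H).map H.subtype = derivedSeries G (i + 1) := by
    rw [commutator_def, Subgroup.map_commutator, ← MonoidHom.range_eq_map,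
      H.range_subtype, derivedSeries_succ]
  have hidx : (derivedSeries G (i + 1)).index =
      (commutator H).index * H.index := by
    rw [← hmap]
    have := Subgroup.index_map (commutator H) H.subtype
    rwa [H.ker_subtype, sup_bot_eq, H.range_subtype] at this
  have : (derivedSeries G (i + 1)).FiniteIndex := by
    constructor
    rw [hidx]
    exact mul_ne_zero hc.index_ne_zero hfin.index_ne_zero
  exact absurd (hmax (i + 1) this) (by omega)
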